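/- Let V ∈ ℝ^{d×d} be symmetric positive definite, let A ∈ ℝ^{d×m} be any matrix, and let w ∈ ℝ^d be nonzero. Then (wᵀ V^{-1} w) / (wᵀ (V + AAᵀ)^{-1} w) ≤ det(I_m + Aᵀ V^{-1} A). Equivalently, the directed information gain log((wᵀ V^{-1} w)/(wᵀ (V + AAᵀ)^{-1} w)) is at most the full information gain log det(I_m + Aᵀ V^{-1} A). -/

import Mathlib

open Matrix

section aux

variable {d : ℕ}

private lemma vmv_mulVec (a b x : Fin d → ℝ) :
    vecMulVec a b *ᵥ x = (b ⬝ᵥ x) • a := by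
  ext i
  simp only [mulVec, dotProduct, vecMulVec_apply, Pi.smul_apply, smul_eq_mul]
  rw [Finset.sum_mul]
  exact Finset.sum_congr rfl fun j _ => by ring

private lemma dot_symm {M : Matrix (Fin d) (Fin d) ℝ} (hM : Mᵀ = M) (a w : Fin d → ℝ) :
    a ⬝ᵥ M *ᵥ w = w ⬝ᵥ M *ᵥ a := by
  rw [dotProduct_comm, ← vecMul_transpose, hM, ← dotProduct_mulVec]

private lemma psd_vmv (a : Fin d → ℝ) : (vecMulVec a a).PosSemidef := by
  refine Matrix.PosSemidef.of_dotProduct_mulVec_nonneg ?_ ?_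
  · ext i j
    simp [conjTranspose_apply, vecMulVec_apply, mul_comm]
  · intro x
    rw [vmv_mulVec]
    have hx : star x = x := by ext i; simp
    rw [hx, dotProduct_smul, smul_eq_mul, dotProduct_comm x a]
    exact mul_self_nonneg _

/-- Cauchy–Schwarz for a positive semidefinite symmetric real matrix. -/
private lemma psd_cs {M : Matrix (Fin d) (Fin d) ℝ} (hM : M.PosSemidef) (hMs : Mᵀ = M)
    (w a : Fin d → ℝ) :
    (w ⬝ᵥ M *ᵥ a) ^ 2 ≤ (w ⬝ᵥ M *ᵥ w) * (a ⬝ᵥ M *ᵥ a) := by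
  have key : ∀ t : ℝ, 0 ≤ (a ⬝ᵥ M *ᵥ a) * (t * t) + (2 * (w ⬝ᵥ M *ᵥ a)) * t + (w ⬝ᵥ M *ᵥ w) := by
    intro t
    have h := hM.dotProduct_mulVec_nonneg (w + t • a)
    have hx : star (w + t • a) = w + t • a := by ext i; simp
    have hsym : a ⬝ᵥ M *ᵥ w = w ⬝ᵥ M *ᵥ a := dot_symm hMs a w
    simp only [hx, mulVec_add, mulVec_smul, dotProduct_add, add_dotProduct,
      smul_dotProduct, dotProduct_smul, smul_eq_mul, hsym] at h
    nlinarith [h]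
  have hd := discrim_le_zero key
  rw [discrim] at hd
  nlinarith [hd]

/-- rank one update inequality -/
private lemma rankone (V : Matrix (Fin d) (Fin d) ℝ) (hV : V.PosDef) (a w : Fin d → ℝ) :
    V.det * (w ⬝ᵥ V⁻¹ *ᵥ w) ≤
      (V + vecMulVec a a).det * (w ⬝ᵥ (V + vecMulVec a a)⁻¹ *ᵥ w) := by
  have hdet : IsUnit V.det := isUnit_iff_ne_zero.mpr hV.det_pos.ne'
  have hVs : Vᵀ = V := by
    rw [← conjTranspose_eq_transpose_of_trivial]; exact hV.isHermitian
  have hVinvS : (V⁻¹)ᵀ = V⁻¹ := by rw [transpose_nonsing_inv, hVs]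
  have hVVinv : V * V⁻¹ = 1 := mul_nonsing_inv V hdet
  set c : ℝ := a ⬝ᵥ V⁻¹ *ᵥ a with hc_def
  set s : ℝ := w ⬝ᵥ V⁻¹ *ᵥ a with hs_def
  set q : ℝ := w ⬝ᵥ V⁻¹ *ᵥ w with hq_def
  have hVinvPsd : (V⁻¹).PosSemidef := hV.inv.posSemidef
  have hc : 0 ≤ c := by
    have h := hVinvPsd.dotProduct_mulVec_nonneg a
    have hx : star a = a := by ext i; simp
    rwa [hx] at h
  have h1c : (0:ℝ) < 1 + c := by linarith
  have hW : (V + vecMulVec a a).PosDef := hV.add_posSemidef (psd_vmv a)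
  have hWdet : IsUnit (V + vecMulVec a a).det := isUnit_iff_ne_zero.mpr hW.det_pos.ne'
  -- determinant identity
  have hdetW : (V + vecMulVec a a).det = V.det * (1 + c) := by
    have hfact : V + vecMulVec a a = V * (1 + V⁻¹ * vecMulVec a a) := by
      rw [mul_add, mul_one, ← mul_assoc, hVVinv, one_mul]
    rw [hfact, det_mul]
    congr 1
    rw [vecMulVec_eq Unit, ← Matrix.mul_assoc, det_one_add_mul_comm, det_unique]
    simp only [Matrix.add_apply, one_apply_eq, mul_apply, replicateCol_apply, replicateRow_apply]
    rw [hc_def]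
    simp only [dotProduct, mulVec, dotProduct]
  -- quadratic form identity via explicit solution
  have hsym : a ⬝ᵥ V⁻¹ *ᵥ w = s := dot_symm hVinvS a w
  set u : Fin d → ℝ := V⁻¹ *ᵥ w - ((1 + c)⁻¹ * s) • (V⁻¹ *ᵥ a) with hu_def
  have hWu : (V + vecMulVec a a) *ᵥ u = w := by
    have hVu : V *ᵥ u = w - ((1 + c)⁻¹ * s) • a := by
      rw [hu_def, mulVec_sub, mulVec_smul, mulVec_mulVec, mulVec_mulVec, hVVinv, one_mulVec,
        one_mulVec]
    have hau : a ⬝ᵥ u = s - (1 + c)⁻¹ * s * c := by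
      rw [hu_def, dotProduct_sub, dotProduct_smul, hsym, smul_eq_mul, hc_def]
    rw [add_mulVec, vmv_mulVec, hVu, hau]
    ext i
    simp only [Pi.add_apply, Pi.sub_apply, Pi.smul_apply, smul_eq_mul]
    field_simp
    ring
  have hWinvw : (V + vecMulVec a a)⁻¹ *ᵥ w = u := by
    rw [← hWu, mulVec_mulVec, nonsing_inv_mul _ hWdet, one_mulVec]
  have hqw : w ⬝ᵥ (V + vecMulVec a a)⁻¹ *ᵥ w = q - (1 + c)⁻¹ * s ^ 2 := by
    rw [hWinvw, hu_def, dotProduct_sub, dotProduct_smul, smul_eq_mul, hq_def, hs_def]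
    ring
  -- Cauchy–Schwarz
  have hcs : s ^ 2 ≤ q * c := psd_cs hVinvPsd hVinvS w a
  rw [hdetW, hqw]
  have hdV : 0 < V.det := hV.det_pos
  have hrhs : V.det * (1 + c) * (q - (1 + c)⁻¹ * s ^ 2) = V.det * ((1 + c) * q - s ^ 2) := by
    field_simp
  rw [hrhs]
  nlinarith [mul_nonneg hdV.le (sub_nonneg.mpr hcs)]

private lemma key_list (w : Fin d → ℝ) (L : List (Fin d → ℝ)) :
    ∀ (V : Matrix (Fin d) (Fin d) ℝ), V.PosDef →
      V.det * (w ⬝ᵥ V⁻¹ *ᵥ w) ≤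
        (V + (L.map fun a => vecMulVec a a).sum).det *
          (w ⬝ᵥ (V + (L.map fun a => vecMulVec a a).sum)⁻¹ *ᵥ w) := by
  induction L with
  | nil => intro V hV; simp
  | cons a L ih =>
    intro V hV
    have h1 := rankone V hV a w
    have h2 := ih (V + vecMulVec a a) (hV.add_posSemidef (psd_vmv a))
    have heq : V + ((a :: L).map fun a => vecMulVec a a).sum
        = (V + vecMulVec a a) + (L.map fun a => vecMulVec a a).sum := by
      simp [List.map_cons, List.sum_cons, add_assoc]
    rw [heq]
    exact h1.trans h2

end aux

/-- **information processing inequality.** For a symmetric positive definite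
matrix `V`, any `d × m` matrix `A`, and any nonzero `w ∈ ℝ^d`,
`(wᵀ V⁻¹ w) / (wᵀ (V + AAᵀ)⁻¹ w) ≤ det (I_m + Aᵀ V⁻¹ A)`. -/
theorem stmt9 (d m : ℕ) (V : Matrix (Fin d) (Fin d) ℝ) (hV : V.PosDef)
    (A : Matrix (Fin d) (Fin m) ℝ) (w : Fin d → ℝ) (hw : w ≠ 0) :
    (w ⬝ᵥ (V⁻¹ *ᵥ w)) / (w ⬝ᵥ ((V + A * Aᵀ)⁻¹ *ᵥ w)) ≤
      Matrix.det ((1 : Matrix (Fin m) (Fin m) ℝ) + Aᵀ * V⁻¹ * A) := by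
  have hAAt : A * Aᵀ = ((List.ofFn fun j : Fin m => Aᵀ j).map fun a => vecMulVec a a).sum := by
    rw [List.map_ofFn, List.sum_ofFn]
    ext i k
    simp only [mul_apply, Function.comp_apply, Matrix.sum_apply, vecMulVec_apply,
      transpose_apply]
  have hAAtPsd : (A * Aᵀ).PosSemidef := by
    have h := posSemidef_self_mul_conjTranspose A
    have : Aᴴ = Aᵀ := by ext i j; simp [conjTranspose_apply]
    rwa [this] at h
  have hW : (V + A * Aᵀ).PosDef := hV.add_posSemidef hAAtPsd
  have hdetV : (0:ℝ) < V.det := hV.det_pos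
  have hdetVu : IsUnit V.det := isUnit_iff_ne_zero.mpr hdetV.ne'
  -- determinant identity
  have hdetid : Matrix.det ((1 : Matrix (Fin m) (Fin m) ℝ) + Aᵀ * V⁻¹ * A)
      = (V + A * Aᵀ).det / V.det := by
    rw [Matrix.mul_assoc, det_one_add_mul_comm]
    have hfact : (1 : Matrix (Fin d) (Fin d) ℝ) + V⁻¹ * A * Aᵀ = V⁻¹ * (V + A * Aᵀ) := by
      rw [mul_add, nonsing_inv_mul _ hdetVu, Matrix.mul_assoc]
    rw [hfact, det_mul, det_nonsing_inv, Ring.inverse_eq_inv]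
    field_simp
  have hkey := key_list w (List.ofFn fun j : Fin m => Aᵀ j) V hV
  rw [← hAAt] at hkey
  have hqW : 0 < w ⬝ᵥ (V + A * Aᵀ)⁻¹ *ᵥ w := by
    have h := hW.inv.dotProduct_mulVec_pos hw
    have hx : star w = w := by ext i; simp
    rwa [hx] at h
  rw [hdetid, div_le_div_iff₀ hqW hdetV]
  linarith [hkey]
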